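/- Let E be a finite-dimensional real inner product space and R an algebraic curvature tensor on E with signed sectional curvatures. If v, w ∈ E are orthonormal and R(w,v)v = 0, then for every t ∈ ℝ, writing c(t) = cos(t)·v + sin(t)·w and c'(t) = −sin(t)·v + cos(t)·w, one has R(c'(t), c(t)) c(t) = 0. In other words, the flat planes distribution v ↦ ker(J_v) ∩ v^⊥ on the unit sphere of E is totally geodesic: it is invariant along great circles. -/

import Mathlib

open scoped RealInnerProductSpace

/-- An algebraic curvature tensor on a real inner product space `E`: a multilinear map
`R : E × E × E × E → ℝ` with the symmetries of the Riemann curvature tensor.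
For vectors `x y z`, the value `R x y z ·` represents the linear functional
`w ↦ ⟨R(x,y)z, w⟩` determined by the curvature operator `R(x,y)z`. -/
structure AlgCurvTensor (E : Type*) [NormedAddCommGroup E] [InnerProductSpace ℝ E] where
  R : E →ₗ[ℝ] E →ₗ[ℝ] E →ₗ[ℝ] E →ₗ[ℝ] ℝ
  antisym_fst : ∀ x y z w : E, R x y z w = - R y x z w
  antisym_snd : ∀ x y z w : E, R x y z w = - R x y w z
  pair_symm : ∀ x y z w : E, R x y z w = R z w x y
  bianchi : ∀ x y z w : E, R x y z w + R y z x w + R z x y w = 0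

/-- `T` has signed sectional curvatures: either all sectional curvatures are `≥ 0`
or all are `≤ 0`. -/
def AlgCurvTensor.SignedSec {E : Type*} [NormedAddCommGroup E] [InnerProductSpace ℝ E]
    (T : AlgCurvTensor E) : Prop :=
  (∀ x y : E, ‖x‖ = 1 → ‖y‖ = 1 → ⟪x, y⟫ = 0 → 0 ≤ T.R x y y x) ∨
  (∀ x y : E, ‖x‖ = 1 → ‖y‖ = 1 → ⟪x, y⟫ = 0 → T.R x y y x ≤ 0)

section Aux

variable {E : Type*} [NormedAddCommGroup E] [InnerProductSpace ℝ E]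

lemma AlgCurvTensor.fst_self (T : AlgCurvTensor E) (x z u : E) : T.R x x z u = 0 := by
  have := T.antisym_fst x x z u; linarith

lemma AlgCurvTensor.snd_self (T : AlgCurvTensor E) (x y z : E) : T.R x y z z = 0 := by
  have := T.antisym_snd x y z z; linarith

/-- If `a t^2 + 2 b t ≥ 0` for all `t` with `a ≥ 0`, then `b = 0`. -/
lemma quad_zero {a b : ℝ} (ha : 0 ≤ a) (h : ∀ t : ℝ, 0 ≤ a * t ^ 2 + 2 * b * t) : b = 0 := by
  have hpos : 0 < a + 1 := by linarith
  have h1 := h (-(b / (a + 1)))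
  have h2 : a * (-(b / (a + 1))) ^ 2 + 2 * b * (-(b / (a + 1)))
      = (b ^ 2 * (-(a + 2))) / (a + 1) ^ 2 := by
    field_simp; ring
  rw [h2] at h1
  rcases div_nonneg_iff.mp h1 with ⟨h3, _⟩ | ⟨h3, h4⟩
  · nlinarith
  · nlinarith [sq_nonneg (a + 1)]

/-- Kernel of a nonnegative symmetric bilinear form. -/
lemma psd_kernel (B : E →ₗ[ℝ] E →ₗ[ℝ] ℝ) (hsymm : ∀ x y, B x y = B y x)
    (hpos : ∀ x, 0 ≤ B x x) (v u : E) (hv : B v v = 0) : B v u = 0 := by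
  apply quad_zero (hpos u)
  intro t
  have := hpos (v + t • u)
  simp only [map_add, map_smul, LinearMap.add_apply, LinearMap.smul_apply, smul_eq_mul] at this
  have expand : B v v + t * B u v + t * (B v u + t * B u u)
      = B u u * t ^ 2 + 2 * B v u * t := by rw [hv, hsymm u v]; ring
  rw [expand] at this
  exact this

end Aux

section Main

variable {E : Type*} [NormedAddCommGroup E] [InnerProductSpace ℝ E]

/-- The symmetric bilinear form `B(x,y) = R(x,w,w,y)` (the Jacobi form of `w`). -/
def jacobiForm (T : AlgCurvTensor E) (w : E) : E →ₗ[ℝ] E →ₗ[ℝ] ℝ where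
  toFun x := T.R x w w
  map_add' x y := by simp [map_add]
  map_smul' c x := by simp [map_smul]

lemma jacobiForm_apply (T : AlgCurvTensor E) (w x y : E) :
    jacobiForm T w x y = T.R x w w y := rfl

lemma jacobiForm_symm (T : AlgCurvTensor E) (w x y : E) :
    jacobiForm T w x y = jacobiForm T w y x := by
  simp only [jacobiForm_apply]
  rw [T.pair_symm y w w x, T.antisym_fst w x y w, T.antisym_snd x w y w]
  ring

/-- If sectional curvatures are `≥ 0` and `‖w‖ = 1`, the Jacobi form of `w` is PSD. -/
lemma jacobiForm_nonneg (T : AlgCurvTensor E) (w : E) (hw : ‖w‖ = 1)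
    (hpos : ∀ x y : E, ‖x‖ = 1 → ‖y‖ = 1 → ⟪x, y⟫ = 0 → 0 ≤ T.R x y y x) (x : E) :
    0 ≤ jacobiForm T w x x := by
  set y := x - ⟪x, w⟫ • w with hy
  have hww : ⟪w, w⟫ = 1 := by
    rw [real_inner_self_eq_norm_sq, hw]; norm_num
  have hyw : ⟪y, w⟫ = 0 := by
    simp [hy, inner_sub_left, real_inner_smul_left, hww, hw]
  have hx : x = y + ⟪x, w⟫ • w := by simp [hy]
  have key : jacobiForm T w x x = T.R y w w y := by
    rw [jacobiForm_apply, hx]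
    simp only [map_add, map_smul, LinearMap.add_apply, LinearMap.smul_apply, smul_eq_mul]
    rw [T.fst_self w w y, T.snd_self y w w, T.fst_self w w w]
    ring
  rw [key]
  rcases eq_or_ne y 0 with h0 | h0
  · simp [h0]
  · have hny : (0:ℝ) < ‖y‖ := norm_pos_iff.mpr h0
    set z := ‖y‖⁻¹ • y with hz
    have hyz : y = ‖y‖ • z := by
      rw [hz, smul_smul, mul_inv_cancel₀ hny.ne', one_smul]
    have hnz : ‖z‖ = 1 := by
      rw [hz, norm_smul]
      simp [abs_of_pos (inv_pos.mpr hny), inv_mul_cancel₀ hny.ne']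
    have hzw : ⟪z, w⟫ = 0 := by
      rw [hz, real_inner_smul_left, hyw, mul_zero]
    have : T.R y w w y = ‖y‖ ^ 2 * T.R z w w z := by
      calc T.R y w w y = T.R (‖y‖ • z) w w (‖y‖ • z) := by rw [← hyz]
        _ = ‖y‖ ^ 2 * T.R z w w z := by
            simp only [map_smul, LinearMap.smul_apply, smul_eq_mul]; ring
    rw [this]
    exact mul_nonneg (sq_nonneg _) (hpos z w hnz hw hzw)

set_option synthInstance.maxHeartbeats 1000000 in
/-- Key step: signed curvature + `R(w,v)v = 0` implies `R(v,w)w = 0`. -/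
lemma key_vanish (T : AlgCurvTensor E) (hsigned : T.SignedSec)
    (v w : E) (hv : ‖v‖ = 1) (hw : ‖w‖ = 1) (hvw : ⟪v, w⟫ = 0)
    (hker : ∀ u : E, T.R w v v u = 0) (u : E) : T.R v w w u = 0 := by
  have hvv : jacobiForm T w v v = 0 := by
    rw [jacobiForm_apply, T.pair_symm v w w v, hker w]
  rcases hsigned with hpos | hneg
  · have := psd_kernel (jacobiForm T w) (jacobiForm_symm T w)
      (jacobiForm_nonneg T w hw hpos) v u hvv
    rw [jacobiForm_apply] at this; exact this
  · let T' : AlgCurvTensor E :=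
      { R := (-1 : ℝ) • T.R
        antisym_fst := fun x y z u => by
          simp only [LinearMap.smul_apply, smul_eq_mul, neg_one_mul]
          rw [T.antisym_fst x y z u]
        antisym_snd := fun x y z u => by
          simp only [LinearMap.smul_apply, smul_eq_mul, neg_one_mul]
          rw [T.antisym_snd x y z u]
        pair_symm := fun x y z u => by
          simp only [LinearMap.smul_apply, smul_eq_mul, neg_one_mul]
          rw [T.pair_symm x y z u]
        bianchi := fun x y z u => by
          simp only [LinearMap.smul_apply, smul_eq_mul, neg_one_mul]
          have := T.bianchi x y z u
          linarith }
    have hT' : ∀ x y z u : E, T'.R x y z u = -(T.R x y z u) := by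
      intro x y z u
      show ((((-1 : ℝ) • T.R) x) y) z u = _
      simp
    have hpos' : ∀ x y : E, ‖x‖ = 1 → ‖y‖ = 1 → ⟪x, y⟫ = 0 → 0 ≤ T'.R x y y x := by
      intro x y hx hy hxy
      rw [hT']
      linarith [hneg x y hx hy hxy]
    have hvv' : jacobiForm T' w v v = 0 := by
      rw [jacobiForm_apply, hT', T.pair_symm v w w v, hker w, neg_zero]
    have := psd_kernel (jacobiForm T' w) (jacobiForm_symm T' w)
      (jacobiForm_nonneg T' w hw hpos') v u hvv'
    rw [jacobiForm_apply, hT'] at this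
    linarith

end Main


/-- The flat planes distribution is totally geodesic: if `v, w` are orthonormal and
`R(w,v)v = 0` (i.e., `w ∈ ker J_v`, expressed by the vanishing of all inner products
`⟨R(w,v)v, u⟩ = R w v v u`), then along the great circle `c(t) = cos t • v + sin t • w`
with velocity `c'(t) = -sin t • v + cos t • w` one has `R(c'(t), c(t)) c(t) = 0`. -/
theorem flat_planes_distribution_totally_geodesic {E : Type*} [NormedAddCommGroup E]
    [InnerProductSpace ℝ E] [FiniteDimensional ℝ E]
    (T : AlgCurvTensor E) (hsigned : T.SignedSec)
    (v w : E) (hv : ‖v‖ = 1) (hw : ‖w‖ = 1) (hvw : ⟪v, w⟫ = 0)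
    (hker : ∀ u : E, T.R w v v u = 0) :
    ∀ t : ℝ, ∀ u : E,
      T.R (-(Real.sin t) • v + Real.cos t • w)
          (Real.cos t • v + Real.sin t • w)
          (Real.cos t • v + Real.sin t • w) u = 0 := by
  intro t u
  have h2 : ∀ u : E, T.R v w w u = 0 :=
    key_vanish T hsigned v w hv hw hvw hker
  have z1 : T.R v w v u = 0 := by
    rw [T.antisym_fst v w v u, hker u, neg_zero]
  have z2 : T.R w v w u = 0 := by
    rw [T.antisym_fst w v w u, h2 u, neg_zero]
  simp only [map_add, map_smul, LinearMap.add_apply, LinearMap.smul_apply, smul_eq_mul,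
    map_neg, LinearMap.neg_apply]
  rw [T.fst_self v v u, T.fst_self w w u, T.fst_self v w u, T.fst_self w v u,
    z1, z2, hker u, h2 u]
  ring
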